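/- Let $t_0 \geq 0$, $h > 0$, $\beta > 0$, $0 < \alpha < 1$. Then for every $t \geq t_0$, $\frac{1}{\Gamma(\alpha)}\int_{t_0}^{t}(t-s)^{\alpha-1}e^{-\beta(t-s)}\,ds \leq \frac{(t_0+h)^{\alpha-1}e^{-\beta(t_0+h)}}{\beta\,\Gamma(\alpha)} + \frac{(t_0+h)^{\alpha}}{\Gamma(\alpha+1)}$. -/

import Mathlib

open Real MeasureTheory intervalIntegral

theorem stmt_1 (t0 h β α : ℝ) (ht0 : 0 ≤ t0) (hh : 0 < h) (hβ : 0 < β)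
    (hα0 : 0 < α) (hα1 : α < 1) (t : ℝ) (ht : t0 ≤ t) :
    (1 / Real.Gamma α) * ∫ s in t0..t, (t - s) ^ (α - 1) * Real.exp (-β * (t - s)) ≤
      (t0 + h) ^ (α - 1) * Real.exp (-β * (t0 + h)) / (β * Real.Gamma α) +
      (t0 + h) ^ α / Real.Gamma (α + 1) := by
  set A := t0 + h with hA
  have hApos : 0 < A := by positivity
  have hΓ : 0 < Real.Gamma α := Real.Gamma_pos_of_pos hα0
  have hr : (-1 : ℝ) < α - 1 := by linarith
  -- integrability of s ↦ (t-s)^(α-1) on any interval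
  have hint : ∀ a b : ℝ, IntervalIntegrable (fun s => (t - s) ^ (α - 1)) volume a b := by
    intro a b
    have := (intervalIntegral.intervalIntegrable_rpow' (a := t - a) (b := t - b) hr).comp_sub_left t
    simpa using this
  -- integrability of the full integrand
  have hintf : ∀ a b : ℝ, IntervalIntegrable
      (fun s => (t - s) ^ (α - 1) * Real.exp (-β * (t - s))) volume a b := by
    intro a b
    exact (hint a b).mul_continuousOn (by fun_prop)
  -- key computation of ∫ (t-s)^(α-1)
  have key : ∀ a : ℝ, a ≤ t → ∫ s in a..t, (t - s) ^ (α - 1) = (t - a) ^ α / α := by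
    intro a ha
    rw [intervalIntegral.integral_comp_sub_left (fun u => u ^ (α - 1)) t,
      integral_rpow (Or.inl hr)]
    have : α - 1 + 1 = α := by ring
    rw [this, sub_self, Real.zero_rpow (ne_of_gt hα0), sub_zero]
  -- pointwise bound: exp factor ≤ 1
  have hpt : ∀ s ∈ Set.Icc t0 t,
      (t - s) ^ (α - 1) * Real.exp (-β * (t - s)) ≤ (t - s) ^ (α - 1) := by
    intro s hs
    have h1 : 0 ≤ t - s := by linarith [hs.2]
    have h2 : Real.exp (-β * (t - s)) ≤ 1 := by
      rw [Real.exp_le_one_iff]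
      nlinarith
    exact mul_le_of_le_one_right (Real.rpow_nonneg h1 _) h2
  suffices hI : (∫ s in t0..t, (t - s) ^ (α - 1) * Real.exp (-β * (t - s))) ≤
      A ^ (α - 1) * Real.exp (-β * A) / β + A ^ α / α by
    rw [Real.Gamma_add_one (ne_of_gt hα0)]
    calc (1 / Real.Gamma α) * ∫ s in t0..t, (t - s) ^ (α - 1) * Real.exp (-β * (t - s))
        ≤ (1 / Real.Gamma α) * (A ^ (α - 1) * Real.exp (-β * A) / β + A ^ α / α) := by
          apply mul_le_mul_of_nonneg_left hI (by positivity)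
      _ = A ^ (α - 1) * Real.exp (-β * A) / (β * Real.Gamma α) + A ^ α / (α * Real.Gamma α) := by
          field_simp
  rcases le_or_gt t (t0 + A) with hcase | hcase
  · -- short time: bound exp by 1
    have h1 : (∫ s in t0..t, (t - s) ^ (α - 1) * Real.exp (-β * (t - s))) ≤
        ∫ s in t0..t, (t - s) ^ (α - 1) :=
      intervalIntegral.integral_mono_on ht (hintf t0 t) (hint t0 t) hpt
    rw [key t0 ht] at h1
    have h2 : (t - t0) ^ α ≤ A ^ α :=
      Real.rpow_le_rpow (by linarith) (by linarith) (le_of_lt hα0)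
    have h3 : 0 ≤ A ^ (α - 1) * Real.exp (-β * A) / β := by positivity
    have h4 : (t - t0) ^ α / α ≤ A ^ α / α := by
      gcongr
    linarith
  · -- long time: split at c = t - A
    set c := t - A with hc
    have hc0 : t0 < c := by simp [hc]; linarith
    have hct : c ≤ t := by simp [hc]; linarith
    rw [← intervalIntegral.integral_add_adjacent_intervals (hintf t0 c) (hintf c t)]
    -- second piece
    have hI2 : (∫ s in c..t, (t - s) ^ (α - 1) * Real.exp (-β * (t - s))) ≤ A ^ α / α := by
      have h1 : (∫ s in c..t, (t - s) ^ (α - 1) * Real.exp (-β * (t - s))) ≤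
          ∫ s in c..t, (t - s) ^ (α - 1) := by
        apply intervalIntegral.integral_mono_on hct (hintf c t) (hint c t)
        intro s hs
        exact hpt s ⟨le_trans (le_of_lt hc0) hs.1, hs.2⟩
      rw [key c hct] at h1
      have : t - c = A := by simp [hc]
      rwa [this] at h1
    -- first piece
    have hI1 : (∫ s in t0..c, (t - s) ^ (α - 1) * Real.exp (-β * (t - s))) ≤
        A ^ (α - 1) * Real.exp (-β * A) / β := by
      have h1 : (∫ s in t0..c, (t - s) ^ (α - 1) * Real.exp (-β * (t - s))) ≤
          ∫ s in t0..c, A ^ (α - 1) * Real.exp (-β * (t - s)) := by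
        apply intervalIntegral.integral_mono_on (le_of_lt hc0) (hintf t0 c)
          (((Continuous.intervalIntegrable (by fun_prop) _ _)))
        intro s hs
        have hAs : A ≤ t - s := by
          have := hs.2
          simp only [hc] at *
          linarith
        have := Real.rpow_le_rpow_of_nonpos hApos hAs (by linarith : α - 1 ≤ 0)
        exact mul_le_mul_of_nonneg_right this (le_of_lt (Real.exp_pos _))
      have h2 : (∫ s in t0..c, Real.exp (-β * (t - s))) =
          (Real.exp (-β * A) - Real.exp (-β * (t - t0))) / β := by
        rw [intervalIntegral.integral_comp_sub_left (fun u => Real.exp (-β * u)) t]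
        rw [intervalIntegral.integral_comp_mul_left Real.exp (by linarith : -β ≠ 0)]
        rw [integral_exp]
        have h3 : t - c = A := by simp [hc]
        rw [h3]
        field_simp [hβ.ne']
        linear_combination (rexp (-(β * A)) - rexp (-(β * (t - t0)))) * (mul_inv_cancel₀ hβ.ne' : β * β⁻¹ = 1)
      rw [intervalIntegral.integral_const_mul, h2] at h1
      calc (∫ s in t0..c, (t - s) ^ (α - 1) * Real.exp (-β * (t - s)))
          ≤ A ^ (α - 1) * ((Real.exp (-β * A) - Real.exp (-β * (t - t0))) / β) := h1
        _ ≤ A ^ (α - 1) * (Real.exp (-β * A) / β) := by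
            apply mul_le_mul_of_nonneg_left _ (le_of_lt (Real.rpow_pos_of_pos hApos _))
            gcongr
            linarith [Real.exp_pos (-β * (t - t0))]
        _ = A ^ (α - 1) * Real.exp (-β * A) / β := by ring
    linarith
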